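/- For every numerical semigroup S ≠ ℕ, the genus satisfies g(S) ≥ ⌈(F(S)+1)/2⌉, with equality if and only if S is irreducible. -/

import Mathlib

def IsNumericalSemigroup (S : Set ℕ) : Prop :=
  0 ∈ S ∧ (∀ a ∈ S, ∀ b ∈ S, a + b ∈ S) ∧ Sᶜ.Finite

noncomputable def multNS (S : Set ℕ) : ℕ := sInf {x ∈ S | x ≠ 0}

noncomputable def frobNS (S : Set ℕ) : ℕ := sSup Sᶜ

noncomputable def genusNS (S : Set ℕ) : ℕ := Sᶜ.ncard

/-- `S` is `m`-irreducible: it lies in `𝒮(m)` and is not the intersection of two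
elements of `𝒮(m)` properly containing it. -/
def MIrreducibleNS (m : ℕ) (S : Set ℕ) : Prop :=
  IsNumericalSemigroup S ∧ multNS S = m ∧
    ¬∃ S₁ S₂ : Set ℕ, (IsNumericalSemigroup S₁ ∧ multNS S₁ = m) ∧
      (IsNumericalSemigroup S₂ ∧ multNS S₂ = m) ∧ S ⊂ S₁ ∧ S ⊂ S₂ ∧ S = S₁ ∩ S₂

/-- `S` is irreducible: not the intersection of two numerical semigroups properly
containing it. -/
def IrreducibleNS (S : Set ℕ) : Prop :=
  IsNumericalSemigroup S ∧
    ¬∃ S₁ S₂ : Set ℕ, IsNumericalSemigroup S₁ ∧ IsNumericalSemigroup S₂ ∧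
      S ⊂ S₁ ∧ S ⊂ S₂ ∧ S = S₁ ∩ S₂

section helpers
variable {S : Set ℕ}

lemma ns_compl_ne (hne : S ≠ Set.univ) : Sᶜ.Nonempty := Set.nonempty_compl.mpr hne

lemma ns_frob_not_mem (hS : IsNumericalSemigroup S) (hne : S ≠ Set.univ) :
    frobNS S ∉ S := (ns_compl_ne hne).csSup_mem hS.2.2

lemma ns_le_frob (hS : IsNumericalSemigroup S) {x : ℕ} (hx : x ∉ S) : x ≤ frobNS S :=
  le_csSup hS.2.2.bddAbove hx

lemma ns_gt_frob (hS : IsNumericalSemigroup S) {x : ℕ} (hx : frobNS S < x) : x ∈ S := by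
  by_contra h
  exact absurd (ns_le_frob hS h) (not_le.mpr hx)

open Classical in
lemma ns_card_eq (hS : IsNumericalSemigroup S) :
    ((Finset.range (frobNS S + 1)).filter (· ∈ S)).card + genusNS S = frobNS S + 1 := by
  classical
  have hfin := hS.2.2
  have hB : (Finset.range (frobNS S + 1)).filter (fun x => x ∉ S) = hfin.toFinset := by
    ext x
    simp only [Finset.mem_filter, Finset.mem_range, Set.Finite.mem_toFinset, Set.mem_compl_iff]
    constructor
    · tauto
    · exact fun hx => ⟨Nat.lt_succ_of_le (ns_le_frob hS hx), hx⟩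
  have hg : genusNS S = hfin.toFinset.card := (Set.ncard_eq_toFinset_card _ hfin)
  rw [hg, ← hB]
  have := Finset.card_filter_add_card_filter_not (s := Finset.range (frobNS S + 1)) (p := (· ∈ S))
  simpa using this

end helpers

section helpers2
variable {S : Set ℕ}

open Classical in
lemma ns_key_ineq (hS : IsNumericalSemigroup S) (hne : S ≠ Set.univ) :
    frobNS S + 1 ≤ 2 * genusNS S := by
  classical
  set F := frobNS S with hF
  have hFnS : F ∉ S := ns_frob_not_mem hS hne
  have hcard := ns_card_eq hS
  set A := (Finset.range (F + 1)).filter (· ∈ S) with hA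
  have hAle : A.card ≤ genusNS S := by
    have hg : genusNS S = hS.2.2.toFinset.card := Set.ncard_eq_toFinset_card _ hS.2.2
    rw [hg]
    apply Finset.card_le_card_of_injOn (fun x => F - x)
    · intro x hx
      simp only [hA, Finset.mem_coe, Finset.mem_filter, Finset.mem_range] at hx
      simp only [Finset.mem_coe, Set.Finite.mem_toFinset, Set.mem_compl_iff]
      intro hmem
      have : x + (F - x) ∈ S := hS.2.1 x hx.2 _ hmem
      have hxF : x ≤ F := Nat.lt_succ_iff.mp hx.1
      rw [Nat.add_sub_cancel' hxF] at this
      exact hFnS this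
    · intro x hx y hy hxy
      simp only [hA, Finset.mem_coe, Finset.mem_filter, Finset.mem_range] at hx hy
      simp only at hxy
      omega
  omega

open Classical in
lemma ns_exists_pair (hS : IsNumericalSemigroup S) (hne : S ≠ Set.univ)
    (h3 : frobNS S + 3 ≤ 2 * genusNS S) :
    ∃ x, x ∉ S ∧ frobNS S - x ∉ S ∧ 2 * x ≠ frobNS S := by
  classical
  by_contra hcon
  push_neg at hcon
  set F := frobNS S with hF
  have hFnS : F ∉ S := ns_frob_not_mem hS hne
  have hcard := ns_card_eq hS
  set A := (Finset.range (F + 1)).filter (· ∈ S) with hA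
  set G := hS.2.2.toFinset with hG
  have hg : genusNS S = G.card := Set.ncard_eq_toFinset_card _ hS.2.2
  have hsplit := Finset.card_filter_add_card_filter_not
    (s := G) (p := fun x => 2 * x ≠ F)
  have h1 : (G.filter (fun x => 2 * x ≠ F)).card ≤ A.card := by
    apply Finset.card_le_card_of_injOn (fun x => F - x)
    · intro x hx
      simp only [Finset.mem_coe, Finset.mem_filter, hG, Set.Finite.mem_toFinset, Set.mem_compl_iff] at hx
      have hxF : x ≤ F := ns_le_frob hS hx.1
      have : F - x ∈ S := by
        by_contra hFx
        exact hx.2 (hcon x hx.1 hFx)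
      simp only [hA, Finset.mem_coe, Finset.mem_filter, Finset.mem_range]
      exact ⟨by omega, this⟩
    · intro x hx y hy hxy
      simp only [Finset.mem_coe, Finset.mem_filter, hG, Set.Finite.mem_toFinset, Set.mem_compl_iff] at hx hy
      simp only at hxy
      have hxF : x ≤ F := ns_le_frob hS hx.1
      have hyF : y ≤ F := ns_le_frob hS hy.1
      omega
  have h2 : (G.filter (fun x => ¬ 2 * x ≠ F)).card ≤ 1 := by
    apply Finset.card_le_one.mpr
    intro a ha b hb
    simp only [Finset.mem_filter, not_not] at ha hb
    omega
  omega

end helpers2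

section helpers3
variable {S : Set ℕ}

lemma ns_insert_frob (hS : IsNumericalSemigroup S) (hne : S ≠ Set.univ) :
    IsNumericalSemigroup (insert (frobNS S) S) := by
  have hF0 : frobNS S ≠ 0 := fun e => ns_frob_not_mem hS hne (e ▸ hS.1)
  refine ⟨Or.inr hS.1, ?_, hS.2.2.subset (Set.compl_subset_compl.mpr (Set.subset_insert _ _))⟩
  have key : ∀ a ∈ S, frobNS S + a ∈ insert (frobNS S) S := by
    intro a ha
    rcases Nat.eq_zero_or_pos a with rfl | hpos
    · exact Or.inl rfl
    · exact Or.inr (ns_gt_frob hS (by omega))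
  rintro a (rfl | ha) b (rfl | hb)
  · exact Or.inr (ns_gt_frob hS (by omega))
  · exact key b hb
  · rw [add_comm]; exact key a ha
  · exact Or.inr (hS.2.1 a ha b hb)

lemma ns_reducible (hS : IsNumericalSemigroup S) (hne : S ≠ Set.univ)
    (h3 : frobNS S + 3 ≤ 2 * genusNS S) :
    ∃ S₁ S₂ : Set ℕ, IsNumericalSemigroup S₁ ∧ IsNumericalSemigroup S₂ ∧
      S ⊂ S₁ ∧ S ⊂ S₂ ∧ S = S₁ ∩ S₂ := by
  set F := frobNS S with hFdef
  set P := {x : ℕ | x ∉ S ∧ F - x ∉ S ∧ 2 * x ≠ F} with hPdef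
  have hPne : P.Nonempty := ns_exists_pair hS hne h3
  have hPfin : P.Finite := hS.2.2.subset (fun x hx => hx.1)
  set h := sSup P with hhdef
  have hhP : h ∈ P := hPne.csSup_mem hPfin
  have hmax : ∀ x ∈ P, x ≤ h := fun x hx => le_csSup hPfin.bddAbove hx
  obtain ⟨hhS, hFh, h2h⟩ := hhP
  have hhF : h ≤ F := ns_le_frob hS hhS
  have hFhP : F - h ∈ P := ⟨hFh, by rw [Nat.sub_sub_self hhF]; exact hhS, by omega⟩
  have hF2h : F < 2 * h := by have := hmax _ hFhP; omega
  have h2hS : 2 * h ∈ S := ns_gt_frob hS hF2h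
  have hadd : ∀ s ∈ S, s ≠ 0 → h + s ∈ S := by
    intro s hs hs0
    by_contra hns
    have hle : h + s ≤ F := ns_le_frob hS hns
    have hFhs : F - (h + s) ∉ S := by
      intro hmem
      have := hS.2.1 _ hmem s hs
      rw [show F - (h + s) + s = F - h by omega] at this
      exact hFh this
    have : h + s ∈ P := ⟨hns, hFhs, by omega⟩
    have := hmax _ this
    omega
  have hT : IsNumericalSemigroup (insert h S) := by
    refine ⟨Or.inr hS.1, ?_, hS.2.2.subset (Set.compl_subset_compl.mpr (Set.subset_insert _ _))⟩
    have key : ∀ a ∈ S, h + a ∈ insert h S := by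
      intro a ha
      rcases Nat.eq_zero_or_pos a with rfl | hpos
      · exact Or.inl rfl
      · exact Or.inr (hadd a ha (by omega))
    rintro a (rfl | ha) b (rfl | hb)
    · refine Or.inr ?_
      have e : h + h = 2 * h := by ring
      rw [e]; exact h2hS
    · exact key b hb
    · rw [add_comm]; exact key a ha
    · exact Or.inr (hS.2.1 a ha b hb)
  have hFnS : F ∉ S := ns_frob_not_mem hS hne
  have hhne : h ≠ F := by
    intro e
    rw [e, Nat.sub_self] at hFh
    exact hFh hS.1
  refine ⟨insert h S, insert F S, hT, ns_insert_frob hS hne,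
    Set.ssubset_insert hhS, Set.ssubset_insert hFnS, ?_⟩
  ext x
  constructor
  · exact fun hx => ⟨Or.inr hx, Or.inr hx⟩
  · rintro ⟨h1, h2⟩
    rcases h1 with rfl | h1
    · rcases h2 with h2 | h2
      · exact absurd h2 hhne
      · exact h2
    · exact h1

end helpers3


theorem stmt11 (S : Set ℕ) (hS : IsNumericalSemigroup S) (hne : S ≠ Set.univ) :
    (frobNS S + 2) / 2 ≤ genusNS S ∧
      (genusNS S = (frobNS S + 2) / 2 ↔ IrreducibleNS S) := by
  have hkey := ns_key_ineq hS hne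
  have hFnS := ns_frob_not_mem hS hne
  refine ⟨by omega, ?_, ?_⟩
  · intro heq
    refine ⟨hS, ?_⟩
    rintro ⟨S₁, S₂, h1, h2, hs1, hs2, hinter⟩
    have hmem : ∀ T : Set ℕ, IsNumericalSemigroup T → S ⊂ T → frobNS S ∈ T := by
      intro T hT hsub
      by_contra hFT
      have hTne : T ≠ Set.univ := fun e => hFT (e ▸ Set.mem_univ _)
      have hk := ns_key_ineq hT hTne
      have hle : frobNS S ≤ frobNS T := ns_le_frob hT hFT
      have hlt : genusNS T < genusNS S := by
        apply Set.ncard_lt_ncard _ hS.2.2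
        constructor
        · exact Set.compl_subset_compl.mpr hsub.1
        · intro hcon
          obtain ⟨x, hxT, hxS⟩ := Set.exists_of_ssubset hsub
          exact (hcon (a := x) hxS) hxT
      omega
    have m1 := hmem S₁ h1 hs1
    have m2 := hmem S₂ h2 hs2
    have hmm : frobNS S ∈ S₁ ∩ S₂ := ⟨m1, m2⟩
    rw [← hinter] at hmm
    exact hFnS hmm
  · intro hirr
    by_contra hneq
    have h3 : frobNS S + 3 ≤ 2 * genusNS S := by omega
    obtain ⟨S₁, S₂, h1, h2, hs1, hs2, hinter⟩ := ns_reducible hS hne h3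
    exact hirr.2 ⟨S₁, S₂, h1, h2, hs1, hs2, hinter⟩
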